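/- Given a linear equality constraint a_1 x_1 + ... + a_p x_p - a_{p+1} x_{p+1} - ... - a_n x_n = b over real variables with a_i > 0 for all i, and real interval domains x_i ∈ [l_i, h_i], define for j ≤ p: α_j = (b - Σ_{i≤p, i≠j} a_i l_i + Σ_{i>p} a_i h_i)/a_j and γ_j = (b - Σ_{i≤p, i≠j} a_i h_i + Σ_{i>p} a_i l_i)/a_j, and for j > p: β_j = (-b + Σ_{i≤p} a_i l_i - Σ_{i>p, i≠j} a_i h_i)/a_j and δ_j = (-b + Σ_{i≤p} a_i h_i - Σ_{i>p, i≠j} a_i l_i)/a_j. Then every solution of the constraint lying in the box Π[l_i, h_i] also lies in the reduced box where for j ≤ p the interval is [max(l_j, γ_j), min(h_j, α_j)] and for j > p it is [max(l_j, β_j), min(h_j, δ_j)]. -/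
import Mathlib


open Finset

theorem rlinear_equality_reduction
    (n p : ℕ) (a l h : Fin n → ℝ) (b : ℝ)
    (ha : ∀ i, 0 < a i)
    (pos neg : Finset (Fin n))
    (hpos : pos = Finset.univ.filter (fun i : Fin n => (i : ℕ) < p))
    (hneg : neg = Finset.univ.filter (fun i : Fin n => ¬ (i : ℕ) < p))
    (d : Fin n → ℝ)
    (hdom : ∀ i, l i ≤ d i ∧ d i ≤ h i)
    (heq : ∑ i ∈ pos, a i * d i - ∑ i ∈ neg, a i * d i = b) :
    (∀ j ∈ pos,
      max (l j) ((b - ∑ i ∈ pos.erase j, a i * h i + ∑ i ∈ neg, a i * l i) / a j) ≤ d j ∧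
      d j ≤ min (h j) ((b - ∑ i ∈ pos.erase j, a i * l i + ∑ i ∈ neg, a i * h i) / a j)) ∧
    (∀ j ∈ neg,
      max (l j) ((-b + ∑ i ∈ pos, a i * l i - ∑ i ∈ neg.erase j, a i * h i) / a j) ≤ d j ∧
      d j ≤ min (h j) ((-b + ∑ i ∈ pos, a i * h i - ∑ i ∈ neg.erase j, a i * l i) / a j)) := by
  have hl : ∀ (s : Finset (Fin n)), ∑ i ∈ s, a i * l i ≤ ∑ i ∈ s, a i * d i :=
    fun s => Finset.sum_le_sum fun i _ =>
      mul_le_mul_of_nonneg_left (hdom i).1 (ha i).le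
  have hh : ∀ (s : Finset (Fin n)), ∑ i ∈ s, a i * d i ≤ ∑ i ∈ s, a i * h i :=
    fun s => Finset.sum_le_sum fun i _ =>
      mul_le_mul_of_nonneg_left (hdom i).2 (ha i).le
  constructor
  · intro j hj
    have hsplit : a j * d j + ∑ i ∈ pos.erase j, a i * d i = ∑ i ∈ pos, a i * d i :=
      Finset.add_sum_erase pos (fun i => a i * d i) hj
    have h1 := hl (pos.erase j)
    have h2 := hh (pos.erase j)
    have h3 := hl neg
    have h4 := hh neg
    constructor
    · refine max_le (hdom j).1 ?_
      rw [div_le_iff₀ (ha j)]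
      nlinarith
    · refine le_min (hdom j).2 ?_
      rw [le_div_iff₀ (ha j)]
      nlinarith
  · intro j hj
    have hsplit : a j * d j + ∑ i ∈ neg.erase j, a i * d i = ∑ i ∈ neg, a i * d i :=
      Finset.add_sum_erase neg (fun i => a i * d i) hj
    have h1 := hl (neg.erase j)
    have h2 := hh (neg.erase j)
    have h3 := hl pos
    have h4 := hh pos
    constructor
    · refine max_le (hdom j).1 ?_
      rw [div_le_iff₀ (ha j)]
      nlinarith
    · refine le_min (hdom j).2 ?_
      rw [le_div_iff₀ (ha j)]
      nlinarith
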